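/- Let f(x) = (−1 + 3x + √(1 − 2x − 3x²)) / (2x·√(1 − 2x − 3x²)), defined on a neighborhood of 0 (extended by the value f(0) = 0). Then f satisfies the differential equation (x − 2x² − 3x³)·f'(x) + (1 − 3x²)·f(x) − 1 = 0 for all x in a punctured neighborhood of 0 where 1 − 2x − 3x² > 0 and x ≠ 0. -/

import Mathlib

noncomputable def fSU2 : ℝ → ℝ := fun x =>
  if x = 0 then 0
  else (-1 + 3 * x + Real.sqrt (1 - 2 * x - 3 * x ^ 2)) /
    (2 * x * Real.sqrt (1 - 2 * x - 3 * x ^ 2))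

theorem fSU2_ode :
    ∀ x : ℝ, x ≠ 0 → 1 - 2 * x - 3 * x ^ 2 > 0 →
      (x - 2 * x ^ 2 - 3 * x ^ 3) * deriv fSU2 x + (1 - 3 * x ^ 2) * fSU2 x - 1 = 0 := by
  intro x hx hu
  set s : ℝ := Real.sqrt (1 - 2 * x - 3 * x ^ 2) with hs_def
  have hs_pos : 0 < s := Real.sqrt_pos.mpr hu
  have hs_ne : s ≠ 0 := ne_of_gt hs_pos
  have hs_sq : s ^ 2 = 1 - 2 * x - 3 * x ^ 2 := Real.sq_sqrt hu.le
  -- the smooth version of fSU2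
  have hq : HasDerivAt (fun y : ℝ => 1 - 2 * y - 3 * y ^ 2) (-2 - 6 * x) x := by
    have h := (((hasDerivAt_const x (1:ℝ)).sub ((hasDerivAt_id x).const_mul 2)).sub
        ((hasDerivAt_pow 2 x).const_mul 3))
    have e : (fun y : ℝ => 1 - 2 * y - 3 * y ^ 2) = ((fun _ => 1) - fun y => 2 * id y) - fun y => 3 * y ^ 2 := by
      funext y; simp
    rw [e]; exact h.congr_deriv (by push_cast; ring)
  have hsqrt : HasDerivAt (fun y : ℝ => Real.sqrt (1 - 2 * y - 3 * y ^ 2))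
      ((-2 - 6 * x) / (2 * s)) x := by
    have := (Real.hasDerivAt_sqrt (ne_of_gt hu)).comp x hq
    simpa [Function.comp_def, hs_def, mul_comm, div_eq_mul_inv, mul_assoc] using this
  have hN : HasDerivAt (fun y : ℝ => -1 + 3 * y + Real.sqrt (1 - 2 * y - 3 * y ^ 2))
      (3 + (-2 - 6 * x) / (2 * s)) x := by
    have h1 : HasDerivAt (fun y : ℝ => -1 + 3 * y) 3 x := by
      simpa using ((hasDerivAt_id x).const_mul 3).const_add (-1 : ℝ)
    exact h1.add hsqrt
  have hD : HasDerivAt (fun y : ℝ => 2 * y * Real.sqrt (1 - 2 * y - 3 * y ^ 2))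
      (2 * s + 2 * x * ((-2 - 6 * x) / (2 * s))) x := by
    have h1 : HasDerivAt (fun y : ℝ => 2 * y) 2 x := by
      simpa using (hasDerivAt_id x).const_mul 2
    simpa [Pi.mul_def, hs_def] using h1.mul hsqrt
  have hD_ne : 2 * x * s ≠ 0 := by positivity
  have hg : HasDerivAt (fun y : ℝ => (-1 + 3 * y + Real.sqrt (1 - 2 * y - 3 * y ^ 2)) /
      (2 * y * Real.sqrt (1 - 2 * y - 3 * y ^ 2)))
      (((3 + (-2 - 6 * x) / (2 * s)) * (2 * x * s) -
        (-1 + 3 * x + s) * (2 * s + 2 * x * ((-2 - 6 * x) / (2 * s)))) / (2 * x * s) ^ 2) x :=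
    hN.div hD hD_ne
  have heq : fSU2 =ᶠ[nhds x] (fun y : ℝ => (-1 + 3 * y + Real.sqrt (1 - 2 * y - 3 * y ^ 2)) /
      (2 * y * Real.sqrt (1 - 2 * y - 3 * y ^ 2))) := by
    filter_upwards [isOpen_ne.mem_nhds hx] with y hy
    simp [fSU2, hy]
  have hderiv : deriv fSU2 x =
      ((3 + (-2 - 6 * x) / (2 * s)) * (2 * x * s) -
        (-1 + 3 * x + s) * (2 * s + 2 * x * ((-2 - 6 * x) / (2 * s)))) / (2 * x * s) ^ 2 := by
    rw [heq.deriv_eq, hg.deriv]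
  have hval : fSU2 x = (-1 + 3 * x + s) / (2 * x * s) := by simp [fSU2, hx, hs_def]
  rw [hderiv, hval]
  field_simp
  linear_combination (2 * x - 18 * x ^ 3) * hs_sq
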